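/- For the q-Lucas type polynomials l_n(x,q) one has l_n(x,q) = Σ_{k=0}^{⌊n/2⌋} (-1)^k q^{C(k,2)} ([n]_q/[n-k]_q) [n-k choose k]_q x^{n-2k} for n ≥ 1, where l_n(x,q) := F_n(x,q) - F_{n-2}(x,q) for n ≥ 2, l_0=1, l_1=x. -/

import Mathlib

/-- The q-Pochhammer symbol `(a;q)_n`. -/
noncomputable def qPoch (a q : ℝ) (n : ℕ) : ℝ := ∏ j ∈ Finset.range n, (1 - q ^ j * a)

/-- The Gaussian (q-)binomial coefficient `[n choose k]_q`. -/
noncomputable def qbinom (q : ℝ) (n k : ℕ) : ℝ :=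
  qPoch q q n / (qPoch q q k * qPoch q q (n - k))

lemma one_sub_pow_pos' {q : ℝ} (hq0 : 0 < q) (hq1 : q < 1) (n : ℕ) : 0 < 1 - q ^ (n + 1) := by
  have : q ^ (n + 1) < 1 := pow_lt_one₀ hq0.le hq1 (by omega)
  linarith

lemma qPoch_pos' {q : ℝ} (hq0 : 0 < q) (hq1 : q < 1) (n : ℕ) : 0 < qPoch q q n := by
  unfold qPoch
  apply Finset.prod_pos
  intro j _
  have h : q ^ j * q = q ^ (j + 1) := by ring
  rw [h]
  exact one_sub_pow_pos' hq0 hq1 j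

lemma qPoch_succ' (q : ℝ) (n : ℕ) : qPoch q q (n + 1) = qPoch q q n * (1 - q ^ (n + 1)) := by
  unfold qPoch
  rw [Finset.prod_range_succ, ← pow_succ]

lemma qbinom_key {q : ℝ} (hq0 : 0 < q) (hq1 : q < 1) (a b : ℕ) :
    q ^ (a + 1) * qbinom q (a + 1 + b) (a + 1) + qbinom q (a + b) a
      = (1 - q ^ (2 * a + 2 + b)) / (1 - q ^ (a + 1 + b)) * qbinom q (a + 1 + b) (a + 1) := by
  have hsub1 : a + 1 + b - (a + 1) = b := by omega
  have hsub2 : a + b - a = b := by omega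
  unfold qbinom
  rw [hsub1, hsub2, show a + 1 + b = (a + b) + 1 from by omega, qPoch_succ', qPoch_succ']
  have hPa := (qPoch_pos' hq0 hq1 a).ne'
  have hPb := (qPoch_pos' hq0 hq1 b).ne'
  have hPab := (qPoch_pos' hq0 hq1 (a + b)).ne'
  have h1 := (one_sub_pow_pos' hq0 hq1 a).ne'
  have h2 := (one_sub_pow_pos' hq0 hq1 (a + b)).ne'
  field_simp
  ring

theorem curious_q_lucas_closed_form (q : ℝ) (hq0 : 0 < q) (hq1 : q < 1)
    (F : ℕ → ℝ → ℝ)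
    (hF : ∀ n x, F n x = ∑ k ∈ Finset.range (n / 2 + 1),
      q ^ (k * (k + 1) / 2) * qbinom q (n - k) k * (-1 : ℝ) ^ k * x ^ (n - 2 * k))
    (l : ℕ → ℝ → ℝ)
    (hl0 : ∀ x, l 0 x = 1) (hl1 : ∀ x, l 1 x = x)
    (hl : ∀ n x, l (n + 2) x = F (n + 2) x - F n x) :
    ∀ n, 1 ≤ n → ∀ x : ℝ,
      l n x = ∑ k ∈ Finset.range (n / 2 + 1),
        (-1 : ℝ) ^ k * q ^ (k * (k - 1) / 2) *
          (((1 - q ^ n) / (1 - q)) / ((1 - q ^ (n - k)) / (1 - q))) *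
          qbinom q (n - k) k * x ^ (n - 2 * k) := by
  have h1q : (1 : ℝ) - q ≠ 0 := by linarith
  intro n hn x
  match n, hn with
  | 1, _ =>
    rw [hl1]
    norm_num [qbinom, qPoch, Finset.prod_range_one]
    rw [div_self h1q, one_mul]
  | (m + 2), _ =>
    rw [hl, hF, hF, show (m + 2) / 2 = m / 2 + 1 from by omega]
    have hsplit : ∀ f : ℕ → ℝ, ∑ k ∈ Finset.range (m / 2 + 1), f k
        = ∑ k ∈ Finset.range (m / 2 + 1 + 1), (if k = 0 then 0 else f (k - 1)) := by
      intro f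
      rw [Finset.sum_range_succ' (fun k => if k = 0 then 0 else f (k - 1)) (m / 2 + 1)]
      simp
    rw [hsplit (fun k => q ^ (k * (k + 1) / 2) * qbinom q (m - k) k * (-1 : ℝ) ^ k
        * x ^ (m - 2 * k)), ← Finset.sum_sub_distrib]
    apply Finset.sum_congr rfl
    intro k hk
    rw [Finset.mem_range] at hk
    match k with
    | 0 =>
      simp only [if_pos rfl, sub_zero]
      have hne : ((1 : ℝ) - q ^ (m + 2)) / (1 - q) ≠ 0 :=
        div_ne_zero (one_sub_pow_pos' hq0 hq1 (m + 1)).ne' h1q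
      simp [Nat.sub_zero, div_self hne]
    | (a + 1) =>
      have h2a : 2 * a ≤ m := by omega
      obtain ⟨b, hb⟩ := Nat.le.dest h2a
      subst hb
      simp only [Nat.succ_ne_zero, if_false, Nat.add_sub_cancel]
      have e1 : 2 * a + b + 2 - (a + 1) = a + 1 + b := by omega
      have e2 : 2 * a + b + 2 - 2 * (a + 1) = b := by omega
      have e3 : 2 * a + b - a = a + b := by omega
      have e4 : 2 * a + b - 2 * a = b := by omega
      have e5 : (a + 1) * (a + 1 + 1) / 2 = a * (a + 1) / 2 + (a + 1) := by
        rw [show (a + 1) * (a + 1 + 1) = a * (a + 1) + 2 * (a + 1) from by ring,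
          Nat.add_mul_div_left _ _ (by norm_num : 0 < 2)]
      have e6 : (a + 1) * a / 2 = a * (a + 1) / 2 := by
        rw [Nat.mul_comm]
      rw [e1, e2, e3, e4, e5, e6, pow_add]
      have hdd : ((1 - q ^ (2 * a + b + 2)) / (1 - q)) / ((1 - q ^ (a + 1 + b)) / (1 - q))
          = (1 - q ^ (2 * a + b + 2)) / (1 - q ^ (a + 1 + b)) := by
        have h2 := (one_sub_pow_pos' hq0 hq1 (a + b)).ne'
        rw [show a + 1 + b = (a + b) + 1 from by omega] at *
        field_simp
      rw [hdd]
      linear_combination ((-1 : ℝ) ^ (a + 1) * q ^ (a * (a + 1) / 2) * x ^ b)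
        * qbinom_key hq0 hq1 a b
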